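/- If α, β ∈ IS_n have equal rank, then there exist permutations τ, π ∈ S_n with β = τ·α·π, and the map f(ξ) = π⁻¹·ξ·τ⁻¹ is a semigroup isomorphism from (IS_n, *_α) to (IS_n, *_β). -/

import Mathlib

/-- `PInj n` : the symmetric inverse semigroup `IS_n`, modeled as partial
injective maps `Fin n → Option (Fin n)`. -/
abbrev PInj (n : ℕ) : Type :=
  {f : Fin n → Option (Fin n) // ∀ x y z : Fin n, f x = some z → f y = some z → x = y}

/-- Composition, applying `f` first, then `g` (left-to-right, as in the paper). -/
def PInj.comp {n : ℕ} (f g : PInj n) : PInj n :=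
  ⟨fun x => (f.1 x).bind g.1, by
    intro x y z hx hy
    rcases Option.bind_eq_some_iff.mp hx with ⟨w, hfw, hgw⟩
    rcases Option.bind_eq_some_iff.mp hy with ⟨v, hfv, hgv⟩
    cases g.2 w v z hgw hgv
    exact f.2 x y w hfw hfv⟩

/-- The deformed multiplication `x *_α y = x · α · y` on `PInj n`. -/
def PInj.dmul {n : ℕ} (α x y : PInj n) : PInj n := (x.comp α).comp y

/-- The range (image) of a partial injection. -/
def PInj.ran {n : ℕ} (f : PInj n) : Set (Fin n) := {y | ∃ x, f.1 x = some y}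

/-- The domain of a partial injection. -/
def PInj.dom {n : ℕ} (f : PInj n) : Set (Fin n) := {x | (f.1 x).isSome}

/-- The rank of a partial injection: the cardinality of its range. -/
noncomputable def PInj.rank {n : ℕ} (f : PInj n) : ℕ := f.ran.ncard

/-- The permutation `σ ∈ S_n` viewed as an element of `IS_n`. -/
def PInj.ofPerm {n : ℕ} (σ : Equiv.Perm (Fin n)) : PInj n :=
  ⟨fun x => some (σ x), by
    intro x y z hx hy
    exact σ.injective ((Option.some.inj hx).trans (Option.some.inj hy).symm)⟩


-- aux lemmas
open Classical in
noncomputable def PInj.restrict {n : ℕ} (f : PInj n) :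
    {x // (f.1 x).isSome} → {y // ∃ x, f.1 x = some y} :=
  fun x => ⟨(f.1 x.1).get x.2, ⟨x.1, (Option.some_get x.2).symm⟩⟩

theorem PInj.restrict_bij {n : ℕ} (f : PInj n) : Function.Bijective f.restrict := by
  constructor
  · rintro ⟨x, hx⟩ ⟨y, hy⟩ hxy
    have h1 : (f.1 x).get hx = (f.1 y).get hy := congrArg Subtype.val hxy
    refine Subtype.ext (f.2 x y ((f.1 y).get hy) ?_ (Option.some_get hy).symm)
    rw [← h1]; exact (Option.some_get hx).symm
  · rintro ⟨y, x, hx⟩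
    refine ⟨⟨x, by simp [hx]⟩, Subtype.ext ?_⟩
    simp [PInj.restrict, hx]

theorem PInj.comp_assoc {n : ℕ} (f g h : PInj n) :
    (f.comp g).comp h = f.comp (g.comp h) := by
  apply Subtype.ext; funext x
  show ((f.1 x).bind g.1).bind h.1 = (f.1 x).bind (fun a => (g.1 a).bind h.1)
  cases f.1 x <;> simp

theorem PInj.ofPerm_comp_ofPerm {n : ℕ} (σ ρ : Equiv.Perm (Fin n)) :
    (PInj.ofPerm σ).comp (PInj.ofPerm ρ) = PInj.ofPerm (ρ * σ) := by
  apply Subtype.ext; funext x; rfl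

theorem PInj.ofPerm_one_comp {n : ℕ} (f : PInj n) : (PInj.ofPerm 1).comp f = f := by
  apply Subtype.ext; funext x; rfl

theorem PInj.comp_ofPerm_one {n : ℕ} (f : PInj n) : f.comp (PInj.ofPerm 1) = f := by
  apply Subtype.ext; funext x
  show (f.1 x).bind (fun a => some ((1 : Equiv.Perm (Fin n)) a)) = f.1 x
  cases f.1 x <;> rfl


theorem PInj.inv_comp_self {n : ℕ} (σ : Equiv.Perm (Fin n)) :
    (PInj.ofPerm σ⁻¹).comp (PInj.ofPerm σ) = PInj.ofPerm 1 := by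
  rw [PInj.ofPerm_comp_ofPerm, mul_inv_cancel]

theorem PInj.self_comp_inv {n : ℕ} (σ : Equiv.Perm (Fin n)) :
    (PInj.ofPerm σ).comp (PInj.ofPerm σ⁻¹) = PInj.ofPerm 1 := by
  rw [PInj.ofPerm_comp_ofPerm, inv_mul_cancel]

theorem PInj.cancel₁ {n : ℕ} (σ : Equiv.Perm (Fin n)) (g : PInj n) :
    (PInj.ofPerm σ⁻¹).comp ((PInj.ofPerm σ).comp g) = g := by
  rw [← PInj.comp_assoc, PInj.ofPerm_comp_ofPerm, mul_inv_cancel, PInj.ofPerm_one_comp]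

theorem PInj.cancel₂ {n : ℕ} (σ : Equiv.Perm (Fin n)) (g : PInj n) :
    (PInj.ofPerm σ).comp ((PInj.ofPerm σ⁻¹).comp g) = g := by
  conv_lhs => rw [← inv_inv σ]
  exact PInj.cancel₁ σ⁻¹ g


/-- If `rank α = rank β` then `β = τ·α·π` for permutations `τ, π ∈ S_n`, and
`f(ξ) = π⁻¹·ξ·τ⁻¹` is a semigroup isomorphism `(IS_n, *_α) → (IS_n, *_β)`. -/
theorem rank_eq_gives_iso (n : ℕ) (α β : PInj n) (h : α.rank = β.rank) :
    ∃ τ π : Equiv.Perm (Fin n),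
      β = ((PInj.ofPerm τ).comp α).comp (PInj.ofPerm π) ∧
      Function.Bijective
        (fun ξ : PInj n => ((PInj.ofPerm π⁻¹).comp ξ).comp (PInj.ofPerm τ⁻¹)) ∧
      ∀ x y : PInj n,
        ((PInj.ofPerm π⁻¹).comp (PInj.dmul α x y)).comp (PInj.ofPerm τ⁻¹) =
          PInj.dmul β (((PInj.ofPerm π⁻¹).comp x).comp (PInj.ofPerm τ⁻¹))
            (((PInj.ofPerm π⁻¹).comp y).comp (PInj.ofPerm τ⁻¹)) := by
  classical
  let eα : {x // (α.1 x).isSome} ≃ {y // ∃ x, α.1 x = some y} :=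
    Equiv.ofBijective _ α.restrict_bij
  let eβ : {x // (β.1 x).isSome} ≃ {y // ∃ x, β.1 x = some y} :=
    Equiv.ofBijective _ β.restrict_bij
  have hcard : Fintype.card {x // (β.1 x).isSome} = Fintype.card {x // (α.1 x).isSome} := by
    rw [Fintype.card_congr eβ, Fintype.card_congr eα]
    have hα : Fintype.card {y // ∃ x, α.1 x = some y} = α.rank := by
      rw [PInj.rank, ← Nat.card_coe_set_eq, Nat.card_eq_fintype_card]
      exact Fintype.card_congr (Equiv.refl _)
    have hβ : Fintype.card {y // ∃ x, β.1 x = some y} = β.rank := by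
      rw [PInj.rank, ← Nat.card_coe_set_eq, Nat.card_eq_fintype_card]
      exact Fintype.card_congr (Equiv.refl _)
    rw [hα, hβ, h]
  let e0 : {x // (β.1 x).isSome} ≃ {x // (α.1 x).isSome} := Fintype.equivOfCardEq hcard
  let e1 : {y // ∃ x, α.1 x = some y} ≃ {y // ∃ x, β.1 x = some y} :=
    (eα.symm.trans e0.symm).trans eβ
  set τ := e0.extendSubtype with hτ
  set π := e1.extendSubtype with hπ
  have hβeq : β = ((PInj.ofPerm τ).comp α).comp (PInj.ofPerm π) := by
    apply Subtype.ext; funext x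
    show β.1 x = ((some (τ x)).bind α.1).bind (fun a => some (π a))
    by_cases hx : (β.1 x).isSome
    · have hτx : τ x = (e0 ⟨x, hx⟩ : {x // (α.1 x).isSome}) :=
        e0.extendSubtype_apply_of_mem x hx
      set a : {x // (α.1 x).isSome} := e0 ⟨x, hx⟩ with ha
      have hαa : α.1 a.1 = some ((eα a).1) := (Option.some_get a.2).symm
      have hπa : π ((eα a).1) = (e1 ⟨(eα a).1, (eα a).2⟩ : Fin n) :=
        e1.extendSubtype_apply_of_mem _ (eα a).2
      have he1 : (e1 ⟨(eα a).1, (eα a).2⟩ : Fin n) = ((eβ ⟨x, hx⟩ : {y // ∃ x, β.1 x = some y}) : Fin n) := by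
        have : (⟨(eα a).1, (eα a).2⟩ : {y // ∃ x, α.1 x = some y}) = eα a := rfl
        rw [this]
        show ((eβ (e0.symm (eα.symm (eα a))) : {y // ∃ x, β.1 x = some y}) : Fin n) = _
        rw [Equiv.symm_apply_apply, ha, Equiv.symm_apply_apply]
      have hβx : β.1 x = some ((eβ ⟨x, hx⟩ : {y // ∃ x, β.1 x = some y}) : Fin n) :=
        (Option.some_get hx).symm
      rw [hτx, Option.bind_some, hαa, Option.bind_some, hπa, he1, hβx]
    · have h1 : β.1 x = none := Option.not_isSome_iff_eq_none.mp hx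
      have h2 : ¬ (α.1 (τ x)).isSome := e0.extendSubtype_not_mem x hx
      rw [h1, Option.bind_some, Option.not_isSome_iff_eq_none.mp h2, Option.bind_none]
  refine ⟨τ, π, hβeq, ?_, ?_⟩
  · constructor
    · intro x y hxy
      have := congrArg (fun ξ : PInj n =>
        ((PInj.ofPerm π).comp ξ).comp (PInj.ofPerm τ)) hxy
      simpa [PInj.comp_assoc, PInj.cancel₁, PInj.cancel₂, PInj.inv_comp_self,
        PInj.self_comp_inv, PInj.ofPerm_one_comp, PInj.comp_ofPerm_one] using this
    · intro y
      refine ⟨((PInj.ofPerm π).comp y).comp (PInj.ofPerm τ), ?_⟩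
      simp [PInj.comp_assoc, PInj.cancel₁, PInj.cancel₂, PInj.inv_comp_self,
        PInj.self_comp_inv, PInj.ofPerm_one_comp, PInj.comp_ofPerm_one]
  · intro x y
    rw [hβeq]
    simp [PInj.dmul, PInj.comp_assoc, PInj.cancel₁, PInj.cancel₂, PInj.inv_comp_self,
      PInj.self_comp_inv, PInj.ofPerm_one_comp, PInj.comp_ofPerm_one]
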